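/- arXiv:1605.09457 — 2 statements merged into one kernel-verified Lean document; each statement's English description precedes it below -/
import Mathlib

section
/- Let S be a nonempty finite set, let δ ∈ (0,1], and let a : S × S → ℝ satisfy δ ≤ a(i,j) ≤ 1 for all i,j ∈ S. Let f : S → ℝ be nonnegative with Σ_{j∈S} f(j) > 0, and let p, q : S → ℝ be nonnegative with Σ_{i∈S} p(i) = Σ_{i∈S} q(i) = 1. Then the sums Σ_{i,j∈S} f(j) a(i,j) p(i) and Σ_{i,j∈S} f(j) a(i,j) q(i) are strictly positive and |log(Σ_{i,j∈S} f(j) a(i,j) p(i)) − log(Σ_{i,j∈S} f(j) a(i,j) q(i))| ≤ δ^{-1} Σ_{i∈S} |p(i) − q(i)|. -/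
open Finset

lemma abs_log_sub_log_le_aux {x y m : ℝ} (hm : 0 < m) (hx : m ≤ x) (hy : m ≤ y) :
    |Real.log x - Real.log y| ≤ |x - y| / m := by
  have key : ∀ u v : ℝ, m ≤ u → m ≤ v → v ≤ u →
      Real.log u - Real.log v ≤ |u - v| / m := by
    intro u v hu hv hvu
    have hv0 : 0 < v := lt_of_lt_of_le hm hv
    have hu0 : 0 < u := lt_of_lt_of_le hm hu
    have h1 : Real.log u - Real.log v = Real.log (u / v) := by
      rw [Real.log_div (ne_of_gt hu0) (ne_of_gt hv0)]
    have h2 : Real.log (u / v) ≤ u / v - 1 :=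
      Real.log_le_sub_one_of_pos (div_pos hu0 hv0)
    have h3 : u / v - 1 = (u - v) / v := by field_simp
    have h4 : (u - v) / v ≤ (u - v) / m := by
      gcongr
    have h5 : (u - v) / m ≤ |u - v| / m := by
      gcongr
      exact le_abs_self _
    linarith
  rcases le_total y x with h | h
  · rw [abs_of_nonneg (by linarith [Real.log_le_log (lt_of_lt_of_le hm hy) h] :
      (0:ℝ) ≤ Real.log x - Real.log y)]
    exact key x y hx hy h
  · rw [abs_sub_comm (Real.log x), abs_sub_comm x y] at *
    rw [abs_of_nonneg (by linarith [Real.log_le_log (lt_of_lt_of_le hm hx) h] :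
      (0:ℝ) ≤ Real.log y - Real.log x)]
    exact key y x hy hx h

/-- **Core estimate in the proof of Lemma 2.1 (filter forgetting bound).**
For a finite set `S`, transition weights `a i j ∈ [δ, 1]` with `δ ∈ (0,1]`, a nonnegative
function `f` with positive total mass, and two probability vectors `p, q` on `S`, both
sums `Σ_{i,j} f j * a i j * p i` and `Σ_{i,j} f j * a i j * q i` are strictly positive and
`|log Σ_{i,j} f j * a i j * p i − log Σ_{i,j} f j * a i j * q i| ≤ δ⁻¹ * Σ_i |p i − q i|`. -/
theorem abs_log_sub_log_le_of_probability_vectors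
    {S : Type*} [Fintype S] [Nonempty S]
    (δ : ℝ) (hδ0 : 0 < δ) (hδ1 : δ ≤ 1)
    (a : S → S → ℝ) (ha : ∀ i j, δ ≤ a i j ∧ a i j ≤ 1)
    (f : S → ℝ) (hf : ∀ j, 0 ≤ f j) (hfpos : 0 < ∑ j, f j)
    (p q : S → ℝ) (hp : ∀ i, 0 ≤ p i) (hq : ∀ i, 0 ≤ q i)
    (hpsum : ∑ i, p i = 1) (hqsum : ∑ i, q i = 1) :
    0 < ∑ i, ∑ j, f j * a i j * p i ∧
    0 < ∑ i, ∑ j, f j * a i j * q i ∧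
    |Real.log (∑ i, ∑ j, f j * a i j * p i) - Real.log (∑ i, ∑ j, f j * a i j * q i)|
      ≤ δ⁻¹ * ∑ i, |p i - q i| := by
  set F := ∑ j, f j with hF
  set g : S → ℝ := fun i => ∑ j, f j * a i j with hg
  have hrw : ∀ r : S → ℝ, (∑ i, ∑ j, f j * a i j * r i) = ∑ i, g i * r i := by
    intro r
    refine Finset.sum_congr rfl fun i _ => ?_
    rw [hg, Finset.sum_mul]
  have hglb : ∀ i, δ * F ≤ g i := by
    intro i
    rw [hg, hF, Finset.mul_sum]
    exact Finset.sum_le_sum fun j _ => by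
      have := (ha i j).1
      nlinarith [hf j]
  have hgub : ∀ i, g i ≤ F := by
    intro i
    rw [hg, hF]
    exact Finset.sum_le_sum fun j _ => by
      have := (ha i j).2
      nlinarith [hf j]
  have hδF : 0 < δ * F := mul_pos hδ0 hfpos
  have hlow : ∀ r : S → ℝ, (∀ i, 0 ≤ r i) → (∑ i, r i = 1) →
      δ * F ≤ ∑ i, g i * r i := by
    intro r hr hrs
    calc δ * F = ∑ i, δ * F * r i := by rw [← Finset.mul_sum, hrs, mul_one]
    _ ≤ ∑ i, g i * r i :=
      Finset.sum_le_sum fun i _ => mul_le_mul_of_nonneg_right (hglb i) (hr i)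
  have hp' : δ * F ≤ ∑ i, g i * p i := hlow p hp hpsum
  have hq' : δ * F ≤ ∑ i, g i * q i := hlow q hq hqsum
  have hdiff : |(∑ i, g i * p i) - (∑ i, g i * q i)| ≤ F * ∑ i, |p i - q i| := by
    rw [← Finset.sum_sub_distrib]
    calc |∑ i, (g i * p i - g i * q i)| ≤ ∑ i, |g i * p i - g i * q i| :=
          Finset.abs_sum_le_sum_abs _ _
      _ ≤ ∑ i, F * |p i - q i| := by
          refine Finset.sum_le_sum fun i _ => ?_
          rw [← mul_sub, abs_mul]
          have hg0 : 0 ≤ g i := le_trans hδF.le (hglb i)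
          rw [abs_of_nonneg hg0]
          exact mul_le_mul_of_nonneg_right (hgub i) (abs_nonneg _)
      _ = F * ∑ i, |p i - q i| := by rw [Finset.mul_sum]
  refine ⟨by rw [hrw p]; linarith, by rw [hrw q]; linarith, ?_⟩
  rw [hrw p, hrw q]
  calc |Real.log (∑ i, g i * p i) - Real.log (∑ i, g i * q i)|
      ≤ |(∑ i, g i * p i) - (∑ i, g i * q i)| / (δ * F) :=
        abs_log_sub_log_le_aux hδF hp' hq'
    _ ≤ (F * ∑ i, |p i - q i|) / (δ * F) := by gcongr
    _ = δ⁻¹ * ∑ i, |p i - q i| := by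
        field_simp
end

section
/- Let S be a nonempty finite set, δ ∈ (0,1], and a : S × S → ℝ with δ ≤ a(i,j) ≤ 1 for all i,j ∈ S. Let f : S → ℝ be nonnegative with Σ_{j∈S} f(j) > 0, let k > l ≥ 0 be integers, and let p, q : S → ℝ be nonnegative with Σ_{i∈S} p(i) = Σ_{i∈S} q(i) = 1 satisfying the total-variation bound Σ_{i∈S} |p(i) − q(i)| ≤ 4(1−δ)^{k−1−l}. Then |log(Σ_{i,j∈S} f(j) a(i,j) p(i)) − log(Σ_{i,j∈S} f(j) a(i,j) q(i))| ≤ 4 δ^{-1} (1−δ)^{k−1−l}. -/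
open Finset

lemma abs_log_sub_log_le_div {x y c : ℝ} (hc : 0 < c) (hx : c ≤ x) (hy : c ≤ y) :
    |Real.log x - Real.log y| ≤ |x - y| / c := by
  have hx0 : 0 < x := hc.trans_le hx
  have hy0 : 0 < y := hc.trans_le hy
  rw [abs_sub_le_iff]
  constructor
  · have h := Real.log_le_sub_one_of_pos (div_pos hx0 hy0)
    rw [Real.log_div hx0.ne' hy0.ne'] at h
    calc Real.log x - Real.log y ≤ x / y - 1 := h
      _ = (x - y) / y := by field_simp
      _ ≤ |x - y| / c := div_le_div₀ (abs_nonneg _) (le_abs_self _) hc hy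
  · have h := Real.log_le_sub_one_of_pos (div_pos hy0 hx0)
    rw [Real.log_div hy0.ne' hx0.ne'] at h
    calc Real.log y - Real.log x ≤ y / x - 1 := h
      _ = (y - x) / x := by field_simp
      _ ≤ |x - y| / c := by
          rw [abs_sub_comm]
          exact div_le_div₀ (abs_nonneg _) (le_abs_self _) hc hx

/-- **Lemma 2.1 of the paper (uniform forgetting bound for `D_{k,l}^ψ`), abstract form.**
For a finite hidden state space `S`, transition weights `a i j ∈ [δ, 1]` with `δ ∈ (0,1]`,
a nonnegative function `f` with positive total mass, integers `k > l ≥ 0`, and two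
probability vectors `p, q` on `S` with `Σ_i |p i − q i| ≤ 4 (1−δ)^(k−1−l)`, one has
`|log Σ_{i,j} f j * a i j * p i − log Σ_{i,j} f j * a i j * q i| ≤ 4 δ⁻¹ (1−δ)^(k−1−l)`. -/
theorem abs_log_sub_log_le_of_tv_bound
    {S : Type*} [Fintype S] [Nonempty S]
    (δ : ℝ) (hδ0 : 0 < δ) (hδ1 : δ ≤ 1)
    (a : S → S → ℝ) (ha : ∀ i j, δ ≤ a i j ∧ a i j ≤ 1)
    (f : S → ℝ) (hf : ∀ j, 0 ≤ f j) (hfpos : 0 < ∑ j, f j)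
    (k l : ℕ) (hlk : l < k)
    (p q : S → ℝ) (hp : ∀ i, 0 ≤ p i) (hq : ∀ i, 0 ≤ q i)
    (hpsum : ∑ i, p i = 1) (hqsum : ∑ i, q i = 1)
    (htv : ∑ i, |p i - q i| ≤ 4 * (1 - δ) ^ (k - 1 - l)) :
    |Real.log (∑ i, ∑ j, f j * a i j * p i) - Real.log (∑ i, ∑ j, f j * a i j * q i)|
      ≤ 4 * δ⁻¹ * (1 - δ) ^ (k - 1 - l) := by
  set F : ℝ := ∑ j, f j with hF
  have hFpos : 0 < F := hfpos
  have hcpos : 0 < δ * F := mul_pos hδ0 hFpos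
  -- lower bound for the double sums
  have lower : ∀ r : S → ℝ, (∀ i, 0 ≤ r i) → (∑ i, r i = 1) →
      δ * F ≤ ∑ i, ∑ j, f j * a i j * r i := by
    intro r hr hrsum
    have key : ∑ i, ∑ j, f j * δ * r i ≤ ∑ i, ∑ j, f j * a i j * r i := by
      apply Finset.sum_le_sum; intro i _
      apply Finset.sum_le_sum; intro j _
      exact mul_le_mul_of_nonneg_right
        (mul_le_mul_of_nonneg_left (ha i j).1 (hf j)) (hr i)
    have eq1 : ∑ i, ∑ j, f j * δ * r i = δ * F := by
      have h1 : ∀ i, ∑ j, f j * δ * r i = F * δ * r i := fun i => by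
        rw [← Finset.sum_mul, ← Finset.sum_mul]
      simp_rw [h1, mul_assoc, ← Finset.mul_sum, hrsum]
      ring
    linarith
  have hAp := lower p hp hpsum
  have hAq := lower q hq hqsum
  -- difference bound
  have hdiff : |(∑ i, ∑ j, f j * a i j * p i) - ∑ i, ∑ j, f j * a i j * q i|
      ≤ F * ∑ i, |p i - q i| := by
    have e : (∑ i, ∑ j, f j * a i j * p i) - ∑ i, ∑ j, f j * a i j * q i
        = ∑ i, (∑ j, f j * a i j) * (p i - q i) := by
      rw [← Finset.sum_sub_distrib]
      apply Finset.sum_congr rfl; intro i _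
      rw [← Finset.sum_sub_distrib, Finset.sum_mul]
      apply Finset.sum_congr rfl; intro j _
      ring
    rw [e, Finset.mul_sum]
    refine (Finset.abs_sum_le_sum_abs _ _).trans (Finset.sum_le_sum ?_)
    intro i _
    rw [abs_mul]
    refine mul_le_mul_of_nonneg_right ?_ (abs_nonneg _)
    rw [abs_of_nonneg (Finset.sum_nonneg fun j _ =>
      mul_nonneg (hf j) ((hδ0.le.trans (ha i j).1)))]
    apply Finset.sum_le_sum; intro j _
    nlinarith [hf j, (ha i j).1, (ha i j).2]
  have hlog := abs_log_sub_log_le_div hcpos hAp hAq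
  have step : |(∑ i, ∑ j, f j * a i j * p i) - ∑ i, ∑ j, f j * a i j * q i| / (δ * F)
      ≤ 4 * δ⁻¹ * (1 - δ) ^ (k - 1 - l) := by
    rw [div_le_iff₀ hcpos]
    calc |(∑ i, ∑ j, f j * a i j * p i) - ∑ i, ∑ j, f j * a i j * q i|
        ≤ F * ∑ i, |p i - q i| := hdiff
      _ ≤ F * (4 * (1 - δ) ^ (k - 1 - l)) := by
          exact mul_le_mul_of_nonneg_left htv hFpos.le
      _ = 4 * δ⁻¹ * (1 - δ) ^ (k - 1 - l) * (δ * F) := by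
          field_simp
  exact hlog.trans step
end
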